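/- Consider the single-market Cournot game with edge set E_k giving access to firms 1,…,k with linear costs c₁ ≤ ⋯ ≤ c_n ≤ α. The production quantity of firm k at the unique Nash equilibrium is strictly positive if and only if α - c_k > (1/k)·Σ_{i=1}^{k-1}(α - c_i). -/
import Mathlib


/-- Participation criterion: firm `k` produces a strictly positive quantity at the Nash
equilibrium iff `α - c_k > (1/k)·Σ_{i<k}(α - c_i)`. -/
theorem stmt7 (k : ℕ) (hk : 1 ≤ k) (α β : ℝ) (hβ : 0 < β) (c : ℕ → ℝ)
    (hmono : ∀ i j, i ≤ j → j < k → c i ≤ c j)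
    (hcα : ∀ i < k, c i ≤ α)
    (q : ℕ → ℝ)
    (hnn : ∀ i < k, 0 ≤ q i)
    (hfoc : ∀ i < k, 0 < q i →
      α - β * (∑ j ∈ Finset.range k, q j) - β * q i = c i)
    (hslack : ∀ i < k, q i = 0 →
      α - β * (∑ j ∈ Finset.range k, q j) ≤ c i) :
    0 < q (k - 1) ↔
      α - c (k - 1) > (1 / (k : ℝ)) * ∑ i ∈ Finset.range (k - 1), (α - c i) := by
  set m := k - 1 with hmdef
  have hkm : k = m + 1 := (Nat.succ_pred_eq_of_pos hk).symm
  have hmk : m < k := by omega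
  set S := ∑ j ∈ Finset.range k, q j with hSdef
  have hsplit : S = (∑ j ∈ Finset.range m, q j) + q m := by
    rw [hSdef, hkm, Finset.sum_range_succ]
  have hkR : (0:ℝ) < (k:ℝ) := by exact_mod_cast hk
  have hkcast : (k:ℝ) = (m:ℝ) + 1 := by rw [hkm]; push_cast; ring
  set T := ∑ i ∈ Finset.range m, (α - c i) with hTdef
  have hMnn : (0:ℝ) ≤ (m:ℝ) := Nat.cast_nonneg m
  constructor
  · intro hq
    have hfm := hfoc m hmk hq
    have hA : ∀ i ∈ Finset.range m, α - c i - β * S ≤ β * q i := by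
      intro i hi
      have hik : i < k := lt_trans (Finset.mem_range.mp hi) hmk
      rcases eq_or_lt_of_le (hnn i hik) with h0 | h0
      · have := hslack i hik h0.symm
        rw [← h0]; linarith
      · have := hfoc i hik h0
        linarith
    have hsum := Finset.sum_le_sum hA
    have hL : ∑ i ∈ Finset.range m, (α - c i - β * S) = T - (m:ℝ) * (β * S) := by
      rw [hTdef, Finset.sum_sub_distrib, Finset.sum_const, Finset.card_range,
        nsmul_eq_mul]
    have hR : ∑ i ∈ Finset.range m, β * q i = β * S - β * q m := by
      rw [← Finset.mul_sum]; rw [hsplit]; ring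
    rw [hL, hR] at hsum
    -- βS = α - c m - β q m
    have hβS : β * S = α - c m - β * q m := by linarith
    have hMeq : (m:ℝ) * (β * S) = (m:ℝ) * (α - c m - β * q m) := by rw [hβS]
    have hqm : 0 < β * q m := mul_pos hβ hq
    have hfin : T < (k:ℝ) * (α - c m) := by
      rw [hkcast]
      nlinarith [mul_nonneg hMnn hqm.le]
    rw [gt_iff_lt, one_div, inv_mul_eq_div, div_lt_iff₀ hkR]
    linarith [hfin]
  · intro hgt
    by_contra hq
    have hq0 : q m = 0 := le_antisymm (not_lt.mp hq) (hnn m hmk)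
    have hsl := hslack m hmk hq0
    have hB : ∀ i ∈ Finset.range m, β * q i ≤ c m - c i := by
      intro i hi
      have him : i < m := Finset.mem_range.mp hi
      have hik : i < k := lt_trans him hmk
      rcases eq_or_lt_of_le (hnn i hik) with h0 | h0
      · have := hmono i m him.le hmk
        rw [← h0, mul_zero]; linarith
      · have := hfoc i hik h0
        linarith
    have hsum := Finset.sum_le_sum hB
    have hR : ∑ i ∈ Finset.range m, (c m - c i)
        = T - (m:ℝ) * (α - c m) := by
      rw [hTdef, Finset.sum_sub_distrib, Finset.sum_sub_distrib,
        Finset.sum_const, Finset.sum_const, Finset.card_range, nsmul_eq_mul,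
        nsmul_eq_mul]
      ring
    have hL : ∑ i ∈ Finset.range m, β * q i = β * S := by
      rw [← Finset.mul_sum, hsplit, hq0]; ring
    rw [hL, hR] at hsum
    -- so k (α - c m) ≤ T
    have hgt' : T < (k:ℝ) * (α - c m) := by
      rw [gt_iff_lt, one_div, inv_mul_eq_div, div_lt_iff₀ hkR] at hgt
      linarith
    rw [hkcast] at hgt'
    linarith
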